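/- Let (X,d) be a metric space, let p be a Borel probability measure on X, and let s ≥ 0. If for p-almost every x ∈ X, liminf_{ε→0} (log p(B(x,ε)))/(log ε) ≥ s, then the Hausdorff dimension of X is at least s. -/

import Mathlib

open MeasureTheory Set Filter Metric
open scoped ENNReal NNReal

/-- Key step: the mass distribution principle. If `p(closedBall x ε) ≤ ε ^ t` for all
`x ∈ A` and all `ε ∈ (0, r]`, then `p A ≤ μH[t] A`. -/
lemma mass_distribution_aux
    {X : Type*} [MetricSpace X] [MeasurableSpace X] [BorelSpace X]
    (p : Measure X) [IsProbabilityMeasure p] {t r : ℝ} (ht : 0 < t) (hr : 0 < r)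
    {A : Set X}
    (hA : ∀ x ∈ A, ∀ ε : ℝ, 0 < ε → ε ≤ r → p (closedBall x ε) ≤ ENNReal.ofReal (ε ^ t)) :
    p A ≤ μH[t] A := by
  -- First, every point of `A` has zero mass.
  have hatom : ∀ x ∈ A, p {x} = 0 := by
    intro x hx
    have htend : Tendsto (fun ε : ℝ => ENNReal.ofReal (ε ^ t)) (nhdsWithin 0 (Ioi 0)) (nhds 0) := by
      have h1 : Tendsto (fun ε : ℝ => ε ^ t) (nhds 0) (nhds 0) := by
        have := Real.continuousAt_rpow_const 0 t (Or.inr ht.le)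
        simpa [Real.zero_rpow ht.ne', ContinuousAt] using this
      have h2 : Tendsto ENNReal.ofReal (nhds (0:ℝ)) (nhds 0) := by
        simpa using ENNReal.continuous_ofReal.tendsto (0:ℝ)
      exact (h2.comp h1).mono_left nhdsWithin_le_nhds
    refine le_antisymm ?_ (zero_le)
    refine ge_of_tendsto htend ?_
    filter_upwards [Ioo_mem_nhdsGT_of_mem (by exact ⟨le_refl 0, hr⟩ : (0:ℝ) ∈ Ico 0 r)]
      with ε hε
    exact le_trans (measure_mono (by simp [hε.1.le])) (hA x hx ε hε.1 hε.2.le)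
  rw [Measure.hausdorffMeasure_apply]
  refine le_iSup₂_of_le (ENNReal.ofReal r) (by simpa using hr) ?_
  refine le_iInf fun U => le_iInf fun hU => le_iInf fun hd => ?_
  have hcover : A ⊆ ⋃ k, U k ∩ A := by
    intro x hx
    rcases mem_iUnion.1 (hU hx) with ⟨k, hk⟩
    exact mem_iUnion.2 ⟨k, hk, hx⟩
  refine le_trans (measure_mono hcover) (le_trans (measure_iUnion_le _) ?_)
  refine ENNReal.tsum_le_tsum fun k => ?_
  rcases eq_empty_or_nonempty (U k ∩ A) with he | ⟨x, hxU, hxA⟩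
  · simp [he]
  have hne : (U k).Nonempty := ⟨x, hxU⟩
  have hDtop : EMetric.diam (U k) ≠ ⊤ :=
    ne_top_of_le_ne_top (by simp) (hd k)
  rcases eq_or_ne (EMetric.diam (U k)) 0 with hD0 | hD0
  · -- the set is a subsingleton, contained in `{x}`
    have hsub : U k ∩ A ⊆ {x} := by
      intro y hy
      have : edist y x = 0 :=
        le_antisymm (hD0 ▸ EMetric.edist_le_diam_of_mem hy.1 hxU) (zero_le)
      simpa [edist_eq_zero] using this
    calc p (U k ∩ A) ≤ p {x} := measure_mono hsub
      _ = 0 := hatom x hxA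
      _ ≤ _ := zero_le
  · set d : ℝ := (EMetric.diam (U k)).toReal with hdd
    have hdpos : 0 < d := ENNReal.toReal_pos hD0 hDtop
    have hdler : d ≤ r := ENNReal.toReal_le_of_le_ofReal hr.le (hd k)
    have hsub : U k ∩ A ⊆ closedBall x d := by
      intro y hy
      have h1 : edist y x ≤ EMetric.diam (U k) := EMetric.edist_le_diam_of_mem hy.1 hxU
      have h2 : dist y x ≤ d := by
        rw [dist_edist]
        exact ENNReal.toReal_mono hDtop h1
      exact h2
    calc p (U k ∩ A) ≤ p (closedBall x d) := measure_mono hsub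
      _ ≤ ENNReal.ofReal (d ^ t) := hA x hxA d hdpos hdler
      _ = ENNReal.ofReal d ^ t := (ENNReal.ofReal_rpow_of_pos hdpos).symm
      _ = EMetric.diam (U k) ^ t := by rw [hdd, ENNReal.ofReal_toReal hDtop]
      _ ≤ _ := le_iSup (fun _ : (U k).Nonempty => EMetric.diam (U k) ^ t) hne

/-- Frostman-type lower bound for the Hausdorff dimension: if `p` is a Borel
probability measure on a metric space `X` such that `p`-almost everywhere
`liminf_{ε→0} log p(B(x,ε)) / log ε ≥ s`, then `dim_H(X) ≥ s`. -/
theorem hausdorff_dim_ge_of_ae_liminf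
    (X : Type*) [MetricSpace X] [MeasurableSpace X] [BorelSpace X]
    (p : Measure X) [IsProbabilityMeasure p] (s : ℝ) (hs : 0 ≤ s)
    (h : ∀ᵐ x ∂p, s ≤ liminf
      (fun ε : ℝ => Real.log (p (closedBall x ε)).toReal / Real.log ε)
      (nhdsWithin 0 (Ioi 0))) :
    ENNReal.ofReal s ≤ dimH (Set.univ : Set X) := by
  rcases eq_or_lt_of_le hs with rfl | hspos
  · simp
  -- It suffices to prove `ofReal t ≤ dimH univ` for every `0 < t < s`.
  suffices H : ∀ t : ℝ, 0 < t → t < s → ENNReal.ofReal t ≤ dimH (Set.univ : Set X) by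
    by_contra hcon
    push_neg at hcon
    have hfin : dimH (Set.univ : Set X) ≠ ⊤ := ne_top_of_lt (lt_of_lt_of_le hcon le_top)
    set D : ℝ := (dimH (Set.univ : Set X)).toReal with hD
    have hD0 : 0 ≤ D := ENNReal.toReal_nonneg
    have hDs : D < s := by
      have := ENNReal.toReal_mono (by simp) hcon.le
      rw [ENNReal.toReal_ofReal hs] at this
      rcases lt_or_eq_of_le this with h' | h'
      · exact h'
      · exfalso
        have : dimH (Set.univ : Set X) = ENNReal.ofReal s := by
          rw [← ENNReal.ofReal_toReal hfin, h']
        exact absurd (this ▸ hcon) (lt_irrefl _)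
    set t : ℝ := (D + s) / 2 with htdef
    have ht1 : 0 < t := by positivity
    have ht2 : t < s := by rw [htdef]; linarith
    have ht3 : D < t := by rw [htdef]; linarith
    have : ENNReal.ofReal t ≤ dimH (Set.univ : Set X) := H t ht1 ht2
    have hlt : dimH (Set.univ : Set X) < ENNReal.ofReal t := by
      rw [← ENNReal.ofReal_toReal hfin]
      exact ENNReal.ofReal_lt_ofReal_iff ht1 |>.2 ht3
    exact absurd (lt_of_lt_of_le hlt this) (lt_irrefl _)
  intro t ht hts
  -- A.e. point has a scale below which the measure of balls is at most `ε ^ t`.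
  have hae : ∀ᵐ x ∂p, ∃ n : ℕ, ∀ ε : ℝ, 0 < ε → ε ≤ 1 / (n + 1) →
      p (closedBall x ε) ≤ ENNReal.ofReal (ε ^ t) := by
    filter_upwards [h] with x hx
    set f : ℝ → ℝ := fun ε => Real.log (p (closedBall x ε)).toReal / Real.log ε with hf
    have hIoo : Ioo (0:ℝ) 1 ∈ nhdsWithin (0:ℝ) (Ioi 0) :=
      Ioo_mem_nhdsGT_of_mem ⟨le_refl 0, one_pos⟩
    have hbdd : IsBoundedUnder (· ≥ ·) (nhdsWithin (0:ℝ) (Ioi 0)) f := by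
      refine isBoundedUnder_of_eventually_ge (a := (0:ℝ)) ?_
      filter_upwards [hIoo] with ε hε
      have hlogε : Real.log ε < 0 := Real.log_neg hε.1 hε.2
      have hnum : Real.log (p (closedBall x ε)).toReal ≤ 0 := by
        apply Real.log_nonpos ENNReal.toReal_nonneg
        have := ENNReal.toReal_mono ENNReal.one_ne_top
          (prob_le_one (μ := p) (s := closedBall x ε))
        simpa using this
      exact div_nonneg_of_nonpos hnum hlogε.le
    have hev : ∀ᶠ ε in nhdsWithin (0:ℝ) (Ioi 0), t < f ε :=
      eventually_lt_of_lt_liminf (lt_of_lt_of_le hts hx) hbdd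
    have hev2 : ∀ᶠ ε in nhdsWithin (0:ℝ) (Ioi 0),
        p (closedBall x ε) ≤ ENNReal.ofReal (ε ^ t) := by
      filter_upwards [hev, hIoo] with ε hεf hε
      have hεt : 0 < ε ^ t := Real.rpow_pos_of_pos hε.1 t
      have key : (p (closedBall x ε)).toReal < ε ^ t := by
        rcases eq_or_lt_of_le (ENNReal.toReal_nonneg (a := p (closedBall x ε))) with h0 | h0
        · rw [← h0]; exact hεt
        · have hlogε : Real.log ε < 0 := Real.log_neg hε.1 hε.2
          have hlt : Real.log (p (closedBall x ε)).toReal < t * Real.log ε :=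
            (lt_div_iff_of_neg hlogε).1 hεf
          have : Real.log (p (closedBall x ε)).toReal < Real.log (ε ^ t) := by
            rwa [Real.log_rpow hε.1]
          exact (Real.log_lt_log_iff h0 hεt).1 this
      calc p (closedBall x ε) = ENNReal.ofReal (p (closedBall x ε)).toReal :=
            (ENNReal.ofReal_toReal (measure_ne_top p _)).symm
        _ ≤ ENNReal.ofReal (ε ^ t) := ENNReal.ofReal_le_ofReal key.le
    rw [Filter.Eventually, Metric.mem_nhdsWithin_iff] at hev2
    obtain ⟨δ, hδ, hδsub⟩ := hev2
    obtain ⟨n, hn⟩ := exists_nat_one_div_lt hδ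
    refine ⟨n, fun ε hε1 hε2 => ?_⟩
    apply hδsub
    constructor
    · rw [Metric.mem_ball, Real.dist_eq, sub_zero, abs_of_pos hε1]
      exact lt_of_le_of_lt hε2 hn
    · exact hε1
  -- Choose `n` such that `A n` has positive measure.
  set A : ℕ → Set X := fun n => {x | ∀ ε : ℝ, 0 < ε → ε ≤ 1 / (n + 1) →
    p (closedBall x ε) ≤ ENNReal.ofReal (ε ^ t)} with hAdef
  have hUnion : p ((⋃ n, A n)ᶜ) = 0 := by
    have hmem : ∀ᵐ x ∂p, x ∈ ⋃ n, A n := by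
      filter_upwards [hae] with x hx
      obtain ⟨n, hn⟩ := hx
      exact mem_iUnion.2 ⟨n, hn⟩
    rw [ae_iff] at hmem
    simpa [Set.compl_def] using hmem
  have hpos : ∃ n, p (A n) ≠ 0 := by
    by_contra hcon
    push_neg at hcon
    have h1 : p (⋃ n, A n) = 0 := measure_iUnion_null hcon
    have h2 : (1 : ℝ≥0∞) = p Set.univ := (measure_univ (μ := p)).symm
    have h3 : p Set.univ ≤ p (⋃ n, A n) + p (⋃ n, A n)ᶜ := by
      rw [← union_compl_self (⋃ n, A n)] at *
      exact measure_union_le _ _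
    rw [h1, hUnion] at h3
    simp [measure_univ] at h3
  obtain ⟨n, hn⟩ := hpos
  have hr : (0:ℝ) < 1 / (n + 1) := by positivity
  have hmass : p (A n) ≤ μH[t] (A n) :=
    mass_distribution_aux p ht hr (fun x hx => hx)
  have hμH : μH[t] (A n) ≠ 0 := fun h0 => hn (le_antisymm (h0 ▸ hmass) (zero_le))
  have hcoe : ((t.toNNReal : ℝ≥0) : ℝ) = t := Real.coe_toNNReal t ht.le
  have hdim : (t.toNNReal : ℝ≥0∞) ≤ dimH (A n) := by
    apply le_dimH_of_hausdorffMeasure_ne_zero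
    rwa [hcoe]
  have hofReal : ENNReal.ofReal t = (t.toNNReal : ℝ≥0∞) := rfl
  rw [hofReal]
  exact hdim.trans (dimH_mono (subset_univ _))
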